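/- For each r, d ∈ ℕ_+ and all n₁, n₂ ∈ ℕ with n₁ ≡ n₂ (mod d), one has (-1)^{n₁}·D_r(n₁) ≡ (-1)^{n₂}·D_r(n₂) (mod d). In particular, the sequence (D_r(n) mod d)_{n ∈ ℕ} is periodic with period d if d is even, and with period 2d if d is odd. -/

import Mathlib

set_option maxHeartbeats 1000000

/-- The `r`-derangement number `D_r(n)`: the number of fixed-point-free permutations
of `n + r` elements such that the first `r` (distinguished) elements lie in pairwise
distinct cycles of the cycle decomposition. -/
noncomputable def rDerangement (r n : ℕ) : ℕ :=
  Nat.card {σ : Equiv.Perm (Fin (n + r)) //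
    (∀ x, σ x ≠ x) ∧
    ∀ i j : Fin (n + r), (i : ℕ) < r → (j : ℕ) < r → i ≠ j → ¬ σ.SameCycle i j}


namespace RDAux

open Finset

section

def f : ℕ → ℕ → ℕ
  | 0, n => numDerangements n
  | _+1, 0 => 0
  | r+1, n+1 => (n+1) * (f r n + f (r+1) n)

lemma f_zero (n : ℕ) : f 0 n = numDerangements n := by simp [f]
lemma f_succ_zero (r : ℕ) : f (r+1) 0 = 0 := rfl
lemma f_succ_succ (r n : ℕ) : f (r+1) (n+1) = (n+1) * (f r n + f (r+1) n) := rfl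

def SInt (r n : ℕ) : ℤ := ∑ k ∈ range (n+1), (-1)^k * (n.descFactorial k) * (k.choose r)

lemma SInt_zero_succ (n : ℕ) : SInt 0 (n+1) = 1 - (n+1) * SInt 0 n := by
  unfold SInt
  rw [Finset.sum_range_succ' _ (n+1)]
  have : ∀ k ∈ range (n+1), ((-1:ℤ))^(k+1) * ((n+1).descFactorial (k+1)) * ((k+1).choose 0)
      = -((n+1) * ((-1)^k * (n.descFactorial k) * (k.choose 0))) := by
    intro k _
    rw [Nat.succ_descFactorial_succ]
    simp only [Nat.choose_zero_right]
    push_cast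
    ring
  rw [Finset.sum_congr rfl this, Finset.sum_neg_distrib, ← Finset.mul_sum]
  simp
  ring

lemma SInt_succ_succ (r n : ℕ) : SInt (r+1) (n+1) = -((n+1) : ℤ) * (SInt r n + SInt (r+1) n) := by
  unfold SInt
  rw [Finset.sum_range_succ' _ (n+1)]
  have : ∀ k ∈ range (n+1), ((-1:ℤ))^(k+1) * ((n+1).descFactorial (k+1)) * ((k+1).choose (r+1))
      = -((n+1) * ((-1)^k * (n.descFactorial k) * (k.choose r)))
        + -((n+1) * ((-1)^k * (n.descFactorial k) * (k.choose (r+1)))) := by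
    intro k _
    rw [Nat.succ_descFactorial_succ, Nat.choose_succ_succ]
    push_cast
    ring
  rw [Finset.sum_congr rfl this, Finset.sum_add_distrib, Finset.sum_neg_distrib,
    Finset.sum_neg_distrib, ← Finset.mul_sum, ← Finset.mul_sum]
  simp
  ring

lemma f_eq_SInt (n : ℕ) : ∀ r, (f r n : ℤ) = (-1)^n * SInt r n := by
  induction n with
  | zero =>
    intro r
    cases r with
    | zero => simp [f_zero, SInt, numDerangements_zero]
    | succ r => simp [f_succ_zero, SInt]
  | succ n ih =>
    intro r
    cases r with
    | zero =>
      rw [f_zero, numDerangements_succ, SInt_zero_succ, ← f_zero, ih 0]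
      ring
    | succ r =>
      rw [f_succ_succ, SInt_succ_succ]
      push_cast
      rw [ih r, ih (r+1)]
      ring

end

section
open Finset

lemma descFactorial_cast_int (n k : ℕ) :
    (n.descFactorial k : ℤ) = ∏ i ∈ range k, ((n:ℤ) - i) := by
  induction k with
  | zero => simp
  | succ k ih =>
    rcases le_or_gt k n with h | h
    · rw [Nat.descFactorial_succ, prod_range_succ, ← ih]
      push_cast [h]
      ring
    · rw [Nat.descFactorial_eq_zero_iff_lt.mpr (by omega)]
      rw [eq_comm]
      push_cast
      refine Finset.prod_eq_zero (i := n) (Finset.mem_range.mpr (by omega)) (by ring)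

lemma prod_vanish {d : ℕ} (hd : 0 < d) (n k : ℕ) (hk : n < k ∨ d ≤ k) :
    (∏ i ∈ range k, ((n:ZMod d) - i)) = 0 := by
  rcases le_or_gt d k with h2 | h2
  · refine Finset.prod_eq_zero (i := n % d)
      (Finset.mem_range.mpr (lt_of_lt_of_le (Nat.mod_lt n hd) h2)) ?_
    rw [ZMod.natCast_mod n d]
    exact sub_self _
  · have h : n < k := by omega
    exact Finset.prod_eq_zero (Finset.mem_range.mpr h) (by push_cast; exact sub_self _)

lemma SInt_zmod {d : ℕ} (hd : 0 < d) (r n : ℕ) :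
    ((SInt r n : ZMod d)) =
      ∑ k ∈ range d, (-1)^k * (∏ i ∈ range k, ((n:ZMod d) - i)) * (k.choose r) := by
  have hcast : ((SInt r n : ZMod d)) =
      ∑ k ∈ range (n+1), (-1)^k * (∏ i ∈ range k, ((n:ZMod d) - i)) * (k.choose r) := by
    rw [SInt]
    push_cast
    refine Finset.sum_congr rfl fun k _ => ?_
    congr 1
    congr 1
    have h1 : ((n.descFactorial k : ℤ) : ZMod d) = ((n.descFactorial k : ℕ) : ZMod d) := by
      push_cast; rfl
    rw [← h1, descFactorial_cast_int]
    push_cast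
    rfl
  have key : ∀ m : ℕ, range m ⊆ range (n + 1 + d) →
      (∀ k, k ∈ range (n + 1 + d) → k ∉ range m → n < k ∨ d ≤ k) →
      ∑ k ∈ range m, ((-1:ZMod d))^k * (∏ i ∈ range k, ((n:ZMod d) - i)) * (k.choose r)
      = ∑ k ∈ range (n + 1 + d), ((-1:ZMod d))^k * (∏ i ∈ range k, ((n:ZMod d) - i)) * (k.choose r) := by
    intro m hsub hcond
    refine Finset.sum_subset hsub fun k hk hk2 => ?_
    rw [prod_vanish hd n k (hcond k hk hk2), mul_zero, zero_mul]
  rw [hcast, key (n+1) (by intro x hx; simp at hx ⊢; omega)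
      (by intro k hk hk2; simp at hk hk2; omega),
    ← key d (by intro x hx; simp at hx ⊢; omega)
      (by intro k hk hk2; simp at hk hk2; omega)]

lemma f_congr {d : ℕ} (hd : 0 < d) (r : ℕ) {n₁ n₂ : ℕ} (h : n₁ ≡ n₂ [MOD d]) :
    ((-1)^n₁ * f r n₁ : ℤ) ≡ (-1)^n₂ * f r n₂ [ZMOD (d:ℤ)] := by
  have he : ∀ n : ℕ, ((-1)^n * f r n : ℤ) = SInt r n := by
    intro n
    rw [f_eq_SInt n r, ← mul_assoc, ← pow_add]
    rw [Even.neg_one_pow ⟨n, by ring⟩, one_mul]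
  rw [he n₁, he n₂]
  rw [← ZMod.intCast_eq_intCast_iff]
  rw [SInt_zmod hd, SInt_zmod hd]
  rw [(ZMod.natCast_eq_natCast_iff _ _ _).mpr h]

end

open Equiv Equiv.Perm

section

variable {α : Type*} [DecidableEq α] [Fintype α]

lemma pow_fixed {σ : Perm α} {a : α} (ha : σ a = a) : ∀ k : ℕ, (σ ^ k) a = a := by
  intro k
  induction k with
  | zero => simp
  | succ i ih => rw [pow_succ, Equiv.Perm.mul_apply, ha, ih]

lemma splice_mpr (σ : Perm α) (a v : α) (hv : v ≠ a) :
    ∀ k : ℕ, ∀ u, u ≠ a → (σ ^ k) u = v → (σ * Equiv.swap (σ⁻¹ a) a).SameCycle u v := by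
  intro k
  induction k using Nat.strong_induction_on with
  | _ k IH =>
    intro u hu hk
    set c := σ * Equiv.swap (σ⁻¹ a) a with hc
    match k, hk with
    | 0, hk => exact ⟨0, hk⟩
    | (k+1), hk =>
      have hw : (σ ^ k) (σ u) = v := by rw [← hk, pow_succ]; rfl
      by_cases hwa : σ u = a
      · have hu2 : u = σ⁻¹ a := by rw [← hwa, (show ∀ x, σ⁻¹ (σ x) = x from σ.symm_apply_apply)]
        have hcu : c u = σ a := by
          rw [hc, hu2, Equiv.Perm.mul_apply, Equiv.swap_apply_left]
        match k, hw with
        | 0, hw =>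
          exact absurd (by rw [← hw, pow_zero, Equiv.Perm.one_apply, hwa]) hv.symm
        | (k'+1), hw =>
          have hsv : (σ ^ k') (σ a) = v := by
            rw [← hw, hwa, pow_succ]; rfl
          by_cases hsa : σ a = a
          · exact absurd (by rw [← hsv, hsa, pow_fixed hsa]) hv
          · have h1 : c.SameCycle u (σ a) := ⟨1, by simpa using hcu⟩
            exact h1.trans (IH k' (by omega) (σ a) hsa hsv)
      · have hub : u ≠ σ⁻¹ a := fun h => hwa (by rw [h, (show ∀ x, σ (σ⁻¹ x) = x from σ.apply_symm_apply)])
        have hcu : c u = σ u := by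
          rw [hc, Equiv.Perm.mul_apply, Equiv.swap_apply_of_ne_of_ne hub hu]
        have h1 : c.SameCycle u (σ u) := ⟨1, by simpa using hcu⟩
        exact h1.trans (IH k (by omega) (σ u) hwa hw)

lemma splice_mp (σ : Perm α) (a v : α) :
    ∀ k : ℕ, ∀ u, u ≠ a → ((σ * Equiv.swap (σ⁻¹ a) a) ^ k) u = v → σ.SameCycle u v := by
  intro k
  induction k with
  | zero => intro u _ hk; exact ⟨0, hk⟩
  | succ k IH =>
    intro u hu hk
    set c := σ * Equiv.swap (σ⁻¹ a) a with hc
    have hca : c a = a := by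
      rw [hc, Equiv.Perm.mul_apply, Equiv.swap_apply_right, (show ∀ x, σ (σ⁻¹ x) = x from σ.apply_symm_apply)]
    have hwa : c u ≠ a := fun h => hu (c.injective (h.trans hca.symm))
    have hw : (c ^ k) (c u) = v := by rw [← hk, pow_succ]; rfl
    have h1 : σ.SameCycle u (c u) := by
      by_cases hub : u = σ⁻¹ a
      · have hcu : c u = σ a := by
          rw [hc, hub, Equiv.Perm.mul_apply, Equiv.swap_apply_left]
        have hsu : σ u = a := by rw [hub, (show ∀ x, σ (σ⁻¹ x) = x from σ.apply_symm_apply)]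
        refine ⟨2, ?_⟩
        rw [hcu, show (2:ℤ) = ((2:ℕ):ℤ) from rfl, zpow_natCast, pow_succ, pow_one,
          Equiv.Perm.mul_apply, hsu]
      · have hcu : c u = σ u := by
          rw [hc, Equiv.Perm.mul_apply, Equiv.swap_apply_of_ne_of_ne hub hu]
        exact ⟨1, by simpa using hcu.symm⟩
    exact h1.trans (IH (c u) hwa hw)

lemma splice_sameCycle (σ : Perm α) (a : α) {u v : α} (hu : u ≠ a) (hv : v ≠ a) :
    (σ * Equiv.swap (σ⁻¹ a) a).SameCycle u v ↔ σ.SameCycle u v := by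
  constructor
  · intro h
    obtain ⟨i, _, hi⟩ := h.exists_pow_eq'
    exact splice_mp σ a v i u hu hi
  · intro h
    obtain ⟨i, _, hi⟩ := h.exists_pow_eq'
    exact splice_mpr σ a v hv i u hu hi

lemma sameCycle_of_fixed {σ : Perm α} {a j : α} (ha : σ a = a) (h : σ.SameCycle a j) : j = a := by
  obtain ⟨i, _, hi⟩ := h.exists_pow_eq'
  rw [← hi, pow_fixed ha]

end

section
open Equiv Equiv.Perm

variable {m : ℕ}

lemma delOne_aux (a : Fin (m+1)) (c : Perm (Fin (m+1))) (hc : c a = a) :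
    ∀ x : Fin (m+1), x ≠ a ↔ c x ≠ a := by
  intro x
  constructor
  · intro hx h
    exact hx (c.injective (h.trans hc.symm))
  · intro hx h
    exact hx (by rw [h, hc])

def delOne (a : Fin (m+1)) : {c : Perm (Fin (m+1)) // c a = a} ≃ Perm (Fin m) where
  toFun c := (finSuccAboveEquiv a).permCongr.symm (c.1.subtypePerm (fun x => (delOne_aux a c.1 c.2 x).symm))
  invFun τ := ⟨Equiv.Perm.ofSubtype ((finSuccAboveEquiv a).permCongr τ),
    Equiv.Perm.ofSubtype_apply_of_not_mem _ (by simp)⟩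
  left_inv c := by
    apply Subtype.ext
    show Equiv.Perm.ofSubtype ((finSuccAboveEquiv a).permCongr
      ((finSuccAboveEquiv a).permCongr.symm _)) = c.1
    rw [Equiv.apply_symm_apply]
    exact Equiv.Perm.ofSubtype_subtypePerm _ (fun x hx => by
      intro h
      apply hx
      rw [h, c.2])
  right_inv τ := by
    show (finSuccAboveEquiv a).permCongr.symm (Equiv.Perm.subtypePerm _ _) = τ
    rw [Equiv.Perm.subtypePerm_ofSubtype, Equiv.symm_apply_apply]

lemma delOne_apply (a : Fin (m+1)) (c : {c : Perm (Fin (m+1)) // c a = a}) (x : Fin m) :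
    a.succAbove ((delOne a c) x) = c.1 (a.succAbove x) := by
  have h1 : ∀ z : Fin m, ((finSuccAboveEquiv a) z : Fin (m+1)) = a.succAbove z := fun z => by
    rw [finSuccAboveEquiv_apply]
  have h2 : ∀ w : {x : Fin (m+1) // x ≠ a}, a.succAbove ((finSuccAboveEquiv a).symm w) = w :=
    fun w => by rw [← h1, Equiv.apply_symm_apply]
  show a.succAbove ((finSuccAboveEquiv a).permCongr.symm _ x) = _
  rw [Equiv.permCongr_symm, Equiv.permCongr_apply, Equiv.symm_symm, h2,
    Equiv.Perm.subtypePerm_apply]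
  show c.1 ((finSuccAboveEquiv a) x : Fin (m+1)) = _
  rw [h1]

lemma delOne_pow (a : Fin (m+1)) (c : {c : Perm (Fin (m+1)) // c a = a}) (k : ℕ) (x : Fin m) :
    a.succAbove (((delOne a c) ^ k) x) = (c.1 ^ k) (a.succAbove x) := by
  induction k generalizing x with
  | zero => simp
  | succ k ih =>
    have e1 : ((delOne a c) ^ (k+1)) x = ((delOne a c) ^ k) ((delOne a c) x) := by
      rw [pow_succ]; rfl
    have e2 : (c.1 ^ (k+1)) (a.succAbove x) = (c.1 ^ k) (c.1 (a.succAbove x)) := by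
      rw [pow_succ]; rfl
    rw [e1, e2, ← delOne_apply]
    exact ih _

lemma delOne_sameCycle (a : Fin (m+1)) (c : {c : Perm (Fin (m+1)) // c a = a}) (x y : Fin m) :
    (delOne a c).SameCycle x y ↔ c.1.SameCycle (a.succAbove x) (a.succAbove y) := by
  constructor
  · intro h
    obtain ⟨i, _, hi⟩ := h.exists_pow_eq'
    refine ⟨(i : ℤ), ?_⟩
    rw [zpow_natCast, ← delOne_pow, hi]
  · intro h
    obtain ⟨i, _, hi⟩ := h.exists_pow_eq'
    refine ⟨(i : ℤ), ?_⟩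
    rw [zpow_natCast]
    apply Fin.succAbove_right_injective (p := a)
    rw [delOne_pow, hi]

lemma delOne_fix (a : Fin (m+1)) (c : {c : Perm (Fin (m+1)) // c a = a}) (x : Fin m) :
    (delOne a c) x = x ↔ c.1 (a.succAbove x) = a.succAbove x := by
  rw [← delOne_apply]
  exact ⟨fun h => by rw [h], fun h => Fin.succAbove_right_injective (p := a) h⟩

lemma succAbove_lt_iff (a : Fin (m+1)) (x : Fin m) (b : ℕ) (hb : b ≤ (a:ℕ)) :
    ((a.succAbove x : ℕ) < b) ↔ (x:ℕ) < b := by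
  rcases lt_or_ge ((x:ℕ)) ((a:ℕ)) with h | h
  · rw [Fin.succAbove_of_castSucc_lt a x (by rw [Fin.lt_def, Fin.coe_castSucc]; exact h)]
    rw [Fin.coe_castSucc]
  · rw [Fin.succAbove_of_le_castSucc a x (by rw [Fin.le_def, Fin.coe_castSucc]; exact h)]
    rw [Fin.val_succ]
    omega

end

section
open Equiv Equiv.Perm

def P (r : ℕ) {M : ℕ} (σ : Equiv.Perm (Fin M)) : Prop :=
  (∀ x, σ x ≠ x) ∧
  ∀ i j : Fin M, (i : ℕ) < r → (j : ℕ) < r → i ≠ j → ¬ σ.SameCycle i j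

noncomputable def subtypeSum {α : Type*} (p q : α → Prop) :
    {x // p x} ≃ ({x // p x ∧ q x} ⊕ {x // p x ∧ ¬ q x}) := by
  classical
  exact ((Equiv.sumCompl (fun x : {x // p x} => q x.1)).symm).trans
    (Equiv.sumCongr (Equiv.subtypeSubtypeEquivSubtypeInter p q)
      (Equiv.subtypeSubtypeEquivSubtypeInter p fun x => ¬ q x))

section Step

variable (r k : ℕ)

variable (hr : r ≤ k)

/-- distinguished index `r` in `Fin (k+2)`. -/
def dr2 : Fin (k+2) := ⟨r, by omega⟩
/-- distinguished index `r` in `Fin (k+1)`. -/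
def dr1 : Fin (k+1) := ⟨r, by omega⟩

variable {r k}

lemma succAbove_dr2 {y : Fin (k+2)} (hy : r < (y:ℕ)) (hr : r ≤ k) :
    y.succAbove (dr1 r k hr) = dr2 r k hr := by
  rw [Fin.succAbove_of_castSucc_lt _ _ (by
    rw [Fin.lt_def, Fin.coe_castSucc]; exact hy)]
  apply Fin.ext
  rfl

end Step
end

section
open Equiv Equiv.Perm

variable {r k : ℕ}

lemma transfer1 (hr : r ≤ k) (y : Fin (k+2)) (hy : r < (y:ℕ))
    (c : {c : Equiv.Perm (Fin (k+2)) // c y = y}) :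
    ((∀ x, x ≠ dr2 r k hr → x ≠ y → c.1 x ≠ x) ∧
      (∀ i j : Fin (k+2), (i:ℕ) < r+1 → (j:ℕ) < r+1 → i ≠ j → ¬ c.1.SameCycle i j)) ↔
    ((∀ x', x' ≠ dr1 r k hr → (delOne y c) x' ≠ x') ∧
      (∀ i j : Fin (k+1), (i:ℕ) < r+1 → (j:ℕ) < r+1 → i ≠ j → ¬ (delOne y c).SameCycle i j)) := by
  constructor
  · rintro ⟨hA, hDC⟩
    constructor
    · intro x' hx'
      simp only [ne_eq, delOne_fix]
      refine hA _ ?_ (Fin.succAbove_ne y x')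
      intro h
      exact hx' (Fin.succAbove_right_injective (p := y) (h.trans (succAbove_dr2 hy hr).symm))
    · intro i j hi hj hij
      rw [delOne_sameCycle]
      exact hDC _ _ ((succAbove_lt_iff y i (r+1) (by omega)).mpr hi)
        ((succAbove_lt_iff y j (r+1) (by omega)).mpr hj)
        (fun h => hij (Fin.succAbove_right_injective h))
  · rintro ⟨hA, hDC⟩
    constructor
    · intro x hxd hxy
      obtain ⟨x', rfl⟩ := Fin.exists_succAbove_eq hxy
      have hx'd : x' ≠ dr1 r k hr := by
        intro h
        exact hxd (by rw [h, succAbove_dr2 hy hr])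
      intro h
      exact hA x' hx'd ((delOne_fix y c x').mpr h)
    · intro i j hi hj hij
      have hiy : i ≠ y := Fin.ne_of_val_ne (by omega)
      have hjy : j ≠ y := Fin.ne_of_val_ne (by omega)
      obtain ⟨i', rfl⟩ := Fin.exists_succAbove_eq hiy
      obtain ⟨j', rfl⟩ := Fin.exists_succAbove_eq hjy
      rw [← delOne_sameCycle]
      exact hDC i' j' ((succAbove_lt_iff y i' (r+1) (by omega)).mp hi)
        ((succAbove_lt_iff y j' (r+1) (by omega)).mp hj)
        (fun h => hij (by rw [h]))

lemma transfer2 (hr : r ≤ k)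
    (τ : {τ : Equiv.Perm (Fin (k+1)) // τ (dr1 r k hr) = dr1 r k hr}) :
    ((∀ x', x' ≠ dr1 r k hr → τ.1 x' ≠ x') ∧
      (∀ i j : Fin (k+1), (i:ℕ) < r+1 → (j:ℕ) < r+1 → i ≠ j → ¬ τ.1.SameCycle i j)) ↔
    P r (delOne (dr1 r k hr) τ) := by
  have hdr : ((dr1 r k hr : Fin (k+1)) : ℕ) = r := rfl
  constructor
  · rintro ⟨hA, hDC⟩
    constructor
    · intro x''
      simp only [ne_eq, delOne_fix]
      exact hA _ (Fin.succAbove_ne _ x'')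
    · intro i j hi hj hij
      rw [delOne_sameCycle]
      refine hDC _ _ ?_ ?_ (fun h => hij (Fin.succAbove_right_injective h))
      · have := (succAbove_lt_iff (dr1 r k hr) i r (le_of_eq hdr.symm)).mpr hi
        omega
      · have := (succAbove_lt_iff (dr1 r k hr) j r (le_of_eq hdr.symm)).mpr hj
        omega
  · rintro ⟨hP1, hP2⟩
    constructor
    · intro x' hx'
      obtain ⟨x'', rfl⟩ := Fin.exists_succAbove_eq hx'
      intro h
      exact hP1 x'' ((delOne_fix _ τ x'').mpr h)
    · intro i j hi hj hij
      by_cases hid : i = dr1 r k hr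
      · subst hid
        intro hsc
        exact hij (sameCycle_of_fixed τ.2 hsc).symm
      by_cases hjd : j = dr1 r k hr
      · subst hjd
        intro hsc
        exact hij (sameCycle_of_fixed τ.2 hsc.symm)
      have hir : (i : ℕ) < r := by
        rcases Nat.lt_or_ge (i:ℕ) r with h | h
        · exact h
        · exact absurd (Fin.ext (by omega : (i:ℕ) = ((dr1 r k hr : Fin (k+1)):ℕ))) hid
      have hjr : (j : ℕ) < r := by
        rcases Nat.lt_or_ge (j:ℕ) r with h | h
        · exact h
        · exact absurd (Fin.ext (by omega : (j:ℕ) = ((dr1 r k hr : Fin (k+1)):ℕ))) hjd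
      obtain ⟨i', rfl⟩ := Fin.exists_succAbove_eq hid
      obtain ⟨j', rfl⟩ := Fin.exists_succAbove_eq hjd
      rw [← delOne_sameCycle]
      exact hP2 i' j' ((succAbove_lt_iff _ i' r (le_of_eq hdr.symm)).mp hir)
        ((succAbove_lt_iff _ j' r (le_of_eq hdr.symm)).mp hjr)
        (fun h => hij (by rw [h]))

noncomputable def e4a (hr : r ≤ k) :
    {τ : Equiv.Perm (Fin (k+1)) //
      ((∀ x', x' ≠ dr1 r k hr → τ x' ≠ x') ∧
        (∀ i j : Fin (k+1), (i:ℕ) < r+1 → (j:ℕ) < r+1 → i ≠ j → ¬ τ.SameCycle i j)) ∧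
      τ (dr1 r k hr) = dr1 r k hr} ≃
    {τ : Equiv.Perm (Fin k) // P r τ} :=
  (Equiv.subtypeEquivRight (fun τ => and_comm)).trans
    (((Equiv.subtypeSubtypeEquivSubtypeInter
        (fun τ : Equiv.Perm (Fin (k+1)) => τ (dr1 r k hr) = dr1 r k hr)
        (fun τ => (∀ x', x' ≠ dr1 r k hr → τ x' ≠ x') ∧
          (∀ i j : Fin (k+1), (i:ℕ) < r+1 → (j:ℕ) < r+1 → i ≠ j → ¬ τ.SameCycle i j))).symm).trans
      ((delOne (dr1 r k hr)).subtypeEquiv (fun τ => transfer2 hr τ)))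

noncomputable def e4b (hr : r ≤ k) :
    {τ : Equiv.Perm (Fin (k+1)) //
      ((∀ x', x' ≠ dr1 r k hr → τ x' ≠ x') ∧
        (∀ i j : Fin (k+1), (i:ℕ) < r+1 → (j:ℕ) < r+1 → i ≠ j → ¬ τ.SameCycle i j)) ∧
      ¬ τ (dr1 r k hr) = dr1 r k hr} ≃
    {τ : Equiv.Perm (Fin (k+1)) // P (r+1) τ} :=
  Equiv.subtypeEquivRight (fun τ => by
    constructor
    · rintro ⟨⟨h1, h2⟩, h3⟩
      refine ⟨fun x => ?_, h2⟩
      by_cases hx : x = dr1 r k hr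
      · subst hx; exact h3
      · exact h1 x hx
    · rintro ⟨h1, h2⟩
      exact ⟨⟨fun x _ => h1 x, h2⟩, h1 _⟩)

noncomputable def fiberEquiv (hr : r ≤ k) (y : Fin (k+2)) (hy : r < (y:ℕ)) :
    {c : Equiv.Perm (Fin (k+2)) //
      c y = y ∧ (∀ x, x ≠ dr2 r k hr → x ≠ y → c x ≠ x) ∧
      (∀ i j : Fin (k+2), (i:ℕ) < r+1 → (j:ℕ) < r+1 → i ≠ j → ¬ c.SameCycle i j)} ≃
    ({τ : Equiv.Perm (Fin k) // P r τ} ⊕ {τ : Equiv.Perm (Fin (k+1)) // P (r+1) τ}) :=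
  ((Equiv.subtypeSubtypeEquivSubtypeInter (fun c : Equiv.Perm (Fin (k+2)) => c y = y)
      (fun c => (∀ x, x ≠ dr2 r k hr → x ≠ y → c x ≠ x) ∧
        (∀ i j : Fin (k+2), (i:ℕ) < r+1 → (j:ℕ) < r+1 → i ≠ j → ¬ c.SameCycle i j))).symm).trans
    (((delOne y).subtypeEquiv (fun c => transfer1 hr y hy c)).trans
      ((subtypeSum _ (fun τ : Equiv.Perm (Fin (k+1)) => τ (dr1 r k hr) = dr1 r k hr)).trans
        (Equiv.sumCongr (e4a hr) (e4b hr))))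

section
open Equiv Equiv.Perm

variable {r k : ℕ}

lemma hy_lemma (hr : r ≤ k) (σ : Equiv.Perm (Fin (k+2))) (hσ : P (r+1) σ) :
    r < (σ (dr2 r k hr) : ℕ) := by
  have hdr2 : ((dr2 r k hr : Fin (k+2)) : ℕ) = r := rfl
  by_contra h
  push_neg at h
  by_cases he : σ (dr2 r k hr) = dr2 r k hr
  · exact hσ.1 _ he
  · exact hσ.2 (dr2 r k hr) (σ (dr2 r k hr)) (by show r < r+1; omega) (by omega)
      (Ne.symm he) ⟨1, by simp⟩

lemma Q_lemma (hr : r ≤ k) (σ : Equiv.Perm (Fin (k+2))) (hσ : P (r+1) σ) :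
    (σ * Equiv.swap (dr2 r k hr) (σ (dr2 r k hr))) (σ (dr2 r k hr)) = σ (dr2 r k hr) ∧
    (∀ x, x ≠ dr2 r k hr → x ≠ σ (dr2 r k hr) →
      (σ * Equiv.swap (dr2 r k hr) (σ (dr2 r k hr))) x ≠ x) ∧
    (∀ i j : Fin (k+2), (i:ℕ) < r+1 → (j:ℕ) < r+1 → i ≠ j →
      ¬ (σ * Equiv.swap (dr2 r k hr) (σ (dr2 r k hr))).SameCycle i j) := by
  have hy := hy_lemma hr σ hσ
  have hdr2 : ((dr2 r k hr : Fin (k+2)) : ℕ) = r := rfl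
  refine ⟨?_, ?_, ?_⟩
  · rw [Equiv.Perm.mul_apply, Equiv.swap_apply_right]
  · intro x h1 h2
    rw [Equiv.Perm.mul_apply, Equiv.swap_apply_of_ne_of_ne h1 h2]
    exact hσ.1 x
  · intro i j hi hj hij
    have hc : σ * Equiv.swap (dr2 r k hr) (σ (dr2 r k hr))
        = σ * Equiv.swap (σ⁻¹ (σ (dr2 r k hr))) (σ (dr2 r k hr)) := by
      rw [(show ∀ x, σ⁻¹ (σ x) = x from σ.symm_apply_apply)]
    rw [hc, splice_sameCycle σ _ (Fin.ne_of_val_ne (by omega))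
      (Fin.ne_of_val_ne (by omega))]
    exact hσ.2 i j hi hj hij

lemma P_lemma (hr : r ≤ k) (y : Fin (k+2)) (hy : r < (y:ℕ)) (c : Equiv.Perm (Fin (k+2)))
    (h1 : c y = y) (h2 : ∀ x, x ≠ dr2 r k hr → x ≠ y → c x ≠ x)
    (h3 : ∀ i j : Fin (k+2), (i:ℕ) < r+1 → (j:ℕ) < r+1 → i ≠ j → ¬ c.SameCycle i j) :
    P (r+1) (c * Equiv.swap (dr2 r k hr) y) := by
  have hdr2 : ((dr2 r k hr : Fin (k+2)) : ℕ) = r := rfl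
  set σ := c * Equiv.swap (dr2 r k hr) y with hσdef
  have hydr : y ≠ dr2 r k hr := Fin.ne_of_val_ne (by omega)
  have hσdr : σ (dr2 r k hr) = y := by
    rw [hσdef, Equiv.Perm.mul_apply, Equiv.swap_apply_left, h1]
  have hσy : σ y = c (dr2 r k hr) := by
    rw [hσdef, Equiv.Perm.mul_apply, Equiv.swap_apply_right]
  constructor
  · intro x
    by_cases hx1 : x = dr2 r k hr
    · subst hx1; rw [hσdr]; exact hydr
    by_cases hx2 : x = y
    · subst hx2
      rw [hσy]
      intro h
      exact hydr (c.injective (h.trans h1.symm)).symm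
    · rw [hσdef, Equiv.Perm.mul_apply, Equiv.swap_apply_of_ne_of_ne hx1 hx2]
      exact h2 x hx1 hx2
  · intro i j hi hj hij
    have hinv : σ⁻¹ y = dr2 r k hr := by
      rw [Equiv.Perm.inv_eq_iff_eq]
      exact hσdr.symm
    have hcc : σ * Equiv.swap (σ⁻¹ y) y = c := by
      rw [hinv, hσdef, mul_assoc, Equiv.swap_mul_self, mul_one]
    rw [← splice_sameCycle σ y (Fin.ne_of_val_ne (by omega : (i:ℕ) ≠ (y:ℕ)))
      (Fin.ne_of_val_ne (by omega : (j:ℕ) ≠ (y:ℕ))), hcc]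
    exact h3 i j hi hj hij

lemma fiberEquiv_congr (hr : r ≤ k) {y₁ y₂ : Fin (k+2)} (h : y₁ = y₂)
    (hy₁ : r < (y₁:ℕ)) (hy₂ : r < (y₂:ℕ)) (C₁) (C₂) (hC : C₁.1 = C₂.1) :
    fiberEquiv hr y₁ hy₁ C₁ = fiberEquiv hr y₂ hy₂ C₂ := by
  subst h
  obtain rfl : C₁ = C₂ := Subtype.ext hC
  rfl

noncomputable def bigEquiv (hr : r ≤ k) :
    {σ : Equiv.Perm (Fin (k+2)) // P (r+1) σ} ≃
    ({y : Fin (k+2) // r < (y:ℕ)} ×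
      ({τ : Equiv.Perm (Fin k) // P r τ} ⊕ {τ : Equiv.Perm (Fin (k+1)) // P (r+1) τ})) where
  toFun σ := (⟨σ.1 (dr2 r k hr), hy_lemma hr σ.1 σ.2⟩,
    fiberEquiv hr (σ.1 (dr2 r k hr)) (hy_lemma hr σ.1 σ.2)
      ⟨σ.1 * Equiv.swap (dr2 r k hr) (σ.1 (dr2 r k hr)), Q_lemma hr σ.1 σ.2⟩)
  invFun p := ⟨((fiberEquiv hr p.1.1 p.1.2).symm p.2).1 * Equiv.swap (dr2 r k hr) p.1.1,
    P_lemma hr p.1.1 p.1.2 _ ((fiberEquiv hr p.1.1 p.1.2).symm p.2).2.1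
      ((fiberEquiv hr p.1.1 p.1.2).symm p.2).2.2.1
      ((fiberEquiv hr p.1.1 p.1.2).symm p.2).2.2.2⟩
  left_inv σ := by
    apply Subtype.ext
    show ((fiberEquiv hr _ _).symm ((fiberEquiv hr _ _) _)).1 * _ = σ.1
    rw [Equiv.symm_apply_apply]
    rw [mul_assoc, Equiv.swap_mul_self, mul_one]
  right_inv p := by
    obtain ⟨⟨y, hy⟩, z⟩ := p
    have hC1 : ((fiberEquiv hr y hy).symm z).1 y = y := ((fiberEquiv hr y hy).symm z).2.1
    have hσdr : (((fiberEquiv hr y hy).symm z).1 * Equiv.swap (dr2 r k hr) y) (dr2 r k hr)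
        = y := by rw [Equiv.Perm.mul_apply, Equiv.swap_apply_left, hC1]
    apply Prod.ext
    · exact Subtype.ext hσdr
    · show fiberEquiv hr _ _ _ = z
      have hcc : (((fiberEquiv hr y hy).symm z).1 * Equiv.swap (dr2 r k hr) y)
          * Equiv.swap (dr2 r k hr)
            ((((fiberEquiv hr y hy).symm z).1 * Equiv.swap (dr2 r k hr) y) (dr2 r k hr))
          = ((fiberEquiv hr y hy).symm z).1 := by
        rw [hσdr, mul_assoc, Equiv.swap_mul_self, mul_one]
      exact (fiberEquiv_congr hr hσdr _ hy _ ((fiberEquiv hr y hy).symm z) hcc).trans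
        (Equiv.apply_symm_apply _ z)

lemma ndCard : Nat.card {y : Fin (k+2) // r < (y:ℕ)} = k+1-r := by
  have e : {y : Fin (k+2) // r < (y:ℕ)} ≃ Fin (k+2-(r+1)) :=
    { toFun := fun y => ⟨y.1.1 - (r+1), by have := y.1.isLt; have := y.2; omega⟩
      invFun := fun w => ⟨⟨w.1 + (r+1), by have := w.isLt; omega⟩, by
        show r < w.1 + (r+1); omega⟩
      left_inv := fun y => Subtype.ext (Fin.ext (by have := y.2; simp; omega))
      right_inv := fun w => Fin.ext (by simp) }
  rw [Nat.card_congr e, Nat.card_eq_fintype_card, Fintype.card_fin]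
  omega

lemma card_step (hr : r ≤ k) :
    Nat.card {σ : Equiv.Perm (Fin (k+2)) // P (r+1) σ}
    = (k+1-r) * (Nat.card {τ : Equiv.Perm (Fin k) // P r τ}
      + Nat.card {τ : Equiv.Perm (Fin (k+1)) // P (r+1) τ}) := by
  rw [Nat.card_congr (bigEquiv hr), Nat.card_prod, Nat.card_sum, ndCard]

end

section
open Equiv Equiv.Perm

lemma card_P_zero (M : ℕ) : Nat.card {σ : Equiv.Perm (Fin M) // P 0 σ} = numDerangements M := by
  have e : {σ : Equiv.Perm (Fin M) // P 0 σ} ≃ ↥(derangements (Fin M)) :=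
    Equiv.subtypeEquivRight (fun σ => by
      constructor
      · rintro ⟨h1, _⟩; exact h1
      · intro h; exact ⟨h, fun i j hi => absurd hi (by omega)⟩)
  rw [Nat.card_congr e, Nat.card_eq_fintype_card]
  convert card_derangements_fin_eq_numDerangements using 2

lemma card_P_small (r M : ℕ) (h1 : 0 < M) (h2 : M ≤ r+1) :
    Nat.card {σ : Equiv.Perm (Fin M) // P (r+1) σ} = 0 := by
  haveI : IsEmpty {σ : Equiv.Perm (Fin M) // P (r+1) σ} := by
    constructor
    rintro ⟨σ, hP⟩
    set z : Fin M := ⟨0, h1⟩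
    exact hP.2 z (σ z) (by omega) (by have := (σ z).isLt; omega)
      (Ne.symm (hP.1 z)) ⟨1, by simp⟩
  exact Nat.card_of_isEmpty

lemma card_eq_f : ∀ n r : ℕ, Nat.card {σ : Equiv.Perm (Fin (n+r)) // P r σ} = f r n := by
  intro n
  induction n with
  | zero =>
    intro r
    cases r with
    | zero => rw [card_P_zero, f_zero]
    | succ r =>
      rw [card_P_small r (0+(r+1)) (by omega) (by omega), f_succ_zero]
  | succ n ih =>
    intro r
    cases r with
    | zero => rw [card_P_zero, f_zero]
    | succ r =>
      rw [show (n+1)+(r+1) = (n+r)+2 from by omega]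
      rw [card_step (Nat.le_add_left r n)]
      rw [show (n+r)+1 = n+(r+1) from by omega]
      rw [ih r, ih (r+1)]
      rw [show n+(r+1)-r = n+1 from by omega, f_succ_succ]

end


end
end RDAux

lemma rDerangement_eq_f (r n : ℕ) : rDerangement r n = RDAux.f r n := by
  have h : rDerangement r n = Nat.card {σ : Equiv.Perm (Fin (n+r)) // RDAux.P r σ} := rfl
  rw [h, RDAux.card_eq_f]

theorem rDerangement_periodicity (r d : ℕ) (hr : 0 < r) (hd : 0 < d) :
    (∀ n₁ n₂ : ℕ, n₁ ≡ n₂ [MOD d] →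
      ((-1) ^ n₁ * rDerangement r n₁ : ℤ) ≡ (-1) ^ n₂ * rDerangement r n₂ [ZMOD (d : ℤ)]) ∧
    (2 ∣ d → ∀ n : ℕ, rDerangement r (n + d) ≡ rDerangement r n [MOD d]) ∧
    (¬ 2 ∣ d → ∀ n : ℕ, rDerangement r (n + 2 * d) ≡ rDerangement r n [MOD d]) := by
  have part1 : ∀ n₁ n₂ : ℕ, n₁ ≡ n₂ [MOD d] →
      ((-1) ^ n₁ * rDerangement r n₁ : ℤ) ≡ (-1) ^ n₂ * rDerangement r n₂ [ZMOD (d : ℤ)] := by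
    intro n₁ n₂ h
    rw [rDerangement_eq_f, rDerangement_eq_f]
    exact RDAux.f_congr hd r h
  have cancel : ∀ a b : ℕ, ∀ n : ℕ, ((-1) ^ n * a : ℤ) ≡ (-1) ^ n * b [ZMOD (d : ℤ)] →
      a ≡ b [MOD d] := by
    intro a b n h
    have h3 := h.mul_left ((-1:ℤ)^n)
    rw [← mul_assoc, ← mul_assoc, ← pow_add, Even.neg_one_pow ⟨n, by ring⟩,
      one_mul, one_mul] at h3
    rw [Nat.modEq_iff_dvd]
    exact h3.dvd
  refine ⟨part1, ?_, ?_⟩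
  · intro h2 n
    have h := part1 (n+d) n (by show (n+d) % d = n % d; rw [Nat.add_mod_right])
    have hev : Even d := by
      obtain ⟨t, rfl⟩ := h2
      exact ⟨t, by ring⟩
    rw [pow_add, Even.neg_one_pow hev, mul_one] at h
    exact cancel _ _ n h
  · intro _ n
    have h := part1 (n+2*d) n (by show (n+2*d) % d = n % d; rw [two_mul, ← add_assoc, Nat.add_mod_right, Nat.add_mod_right])
    rw [pow_add, Even.neg_one_pow (even_two_mul d), mul_one] at h
    exact cancel _ _ n h
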